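/- Let k be a positive integer and d ≥ 0. Then ∫_{(√k + d)²}^∞ (t^k / k!) e^{-t} dt ≤ e^{-d²}. -/

import Mathlib

open MeasureTheory Finset

theorem stmt_5 (k : ℕ) (hk : 0 < k) (d : ℝ) (hd : 0 ≤ d) :
    ∫ t in Set.Ioi ((Real.sqrt k + d) ^ 2), t ^ k / (Nat.factorial k) * Real.exp (-t) ≤
      Real.exp (-d ^ 2) := by
  have hk0 : (0:ℝ) < k := by exact_mod_cast hk
  set s := Real.sqrt k with hs
  have hs0 : 0 < s := Real.sqrt_pos.mpr hk0
  have hs2 : s ^ 2 = k := Real.sq_sqrt hk0.le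
  set a := (s + d) ^ 2 with hadef
  have ha0 : 0 < a := by positivity
  have hak : (k:ℝ) ≤ a := by nlinarith
  -- the antiderivative
  set g : ℝ → ℝ := fun t => Real.exp (-t) * ∑ j ∈ range (k+1), t ^ j / (j.factorial : ℝ)
    with hg
  have hderiv : ∀ t : ℝ, HasDerivAt (fun t => -g t)
      (t ^ k / (k.factorial : ℝ) * Real.exp (-t)) t := by
    intro t
    have hP : HasDerivAt (fun t : ℝ => ∑ j ∈ range (k+1), t ^ j / (j.factorial : ℝ))
        (∑ j ∈ range k, t ^ j / (j.factorial : ℝ)) t := by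
      have h1 : HasDerivAt (fun t : ℝ => ∑ j ∈ range (k+1), t ^ j / (j.factorial : ℝ))
          (∑ j ∈ range (k+1), (j : ℝ) * t ^ (j - 1) / (j.factorial : ℝ)) t :=
        HasDerivAt.fun_sum fun j _ => (hasDerivAt_pow j t).div_const _
      convert h1 using 1
      rw [Finset.sum_range_succ']
      simp only [Nat.cast_zero, Nat.factorial_zero, Nat.cast_one]
      rw [show ((0:ℝ) * t ^ (0-1) / 1) = 0 by ring, add_zero]
      refine Finset.sum_congr rfl fun i _ => ?_
      rw [Nat.factorial_succ]
      push_cast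
      have : (i:ℝ) + 1 ≠ 0 := by positivity
      field_simp
    have hE : HasDerivAt (fun t : ℝ => Real.exp (-t)) (-Real.exp (-t)) t := by
      exact ((Real.hasDerivAt_exp (-t)).comp t (hasDerivAt_neg t)).congr_deriv (by ring)
    have := (hE.mul hP).neg
    refine this.congr_deriv ?_
    have hsplit : (∑ j ∈ range (k+1), t ^ j / (j.factorial : ℝ))
        = (∑ j ∈ range k, t ^ j / (j.factorial : ℝ)) + t ^ k / (k.factorial : ℝ) :=
      Finset.sum_range_succ _ _
    rw [hsplit]; ring
  have htendg : Filter.Tendsto g Filter.atTop (nhds 0) := by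
    have : g = fun t => ∑ j ∈ range (k+1), (t ^ j * Real.exp (-t)) / (j.factorial : ℝ) := by
      funext t
      show Real.exp (-t) * ∑ j ∈ range (k+1), t ^ j / (j.factorial : ℝ) = _
      rw [Finset.mul_sum]
      exact Finset.sum_congr rfl fun j _ => by ring
    rw [this]
    have : Filter.Tendsto (fun t : ℝ => ∑ j ∈ range (k+1), (t ^ j * Real.exp (-t)) / (j.factorial : ℝ))
        Filter.atTop (nhds (∑ j ∈ range (k+1), 0)) := by
      refine tendsto_finset_sum _ fun j _ => ?_
      simpa using ((Real.tendsto_pow_mul_exp_neg_atTop_nhds_zero j).div_const ((j.factorial : ℝ)))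
    simpa using this
  have hint : ∫ t in Set.Ioi a, t ^ k / (k.factorial : ℝ) * Real.exp (-t) = g a := by
    have h := integral_Ioi_of_hasDerivAt_of_nonneg' (g := fun t => -g t)
      (g' := fun t => t ^ k / (k.factorial : ℝ) * Real.exp (-t)) (a := a) (l := 0)
      (fun x _ => hderiv x)
      (fun x hx => by
        have hx0 : 0 < x := lt_trans ha0 hx
        positivity)
      (by simpa using htendg.neg)
    rw [h]; ring
  rw [hint]
  -- now bound g a = exp(-a) * ∑ ≤ exp(-d²)
  have hsum : (∑ j ∈ range (k+1), a ^ j / (j.factorial : ℝ)) ≤ (a / k) ^ k * Real.exp k := by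
    have h1 : (∑ j ∈ range (k+1), a ^ j / (j.factorial : ℝ))
        ≤ ∑ j ∈ range (k+1), (a / k) ^ k * ((k:ℝ) ^ j / (j.factorial : ℝ)) := by
      refine Finset.sum_le_sum fun j hj => ?_
      have hj' : j ≤ k := Nat.lt_succ_iff.mp (Finset.mem_range.mp hj)
      have hak1 : (1:ℝ) ≤ a / k := (one_le_div hk0).mpr hak
      have : a ^ j = (a / k) ^ j * (k:ℝ) ^ j := by
        rw [← mul_pow]; rw [div_mul_cancel₀]; exact ne_of_gt hk0
      rw [this]
      have hpow : (a / k) ^ j ≤ (a / k) ^ k := pow_le_pow_right₀ hak1 hj'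
      have hkj : (0:ℝ) ≤ (k:ℝ) ^ j / (j.factorial : ℝ) := by positivity
      calc (a / k) ^ j * (k:ℝ) ^ j / (j.factorial : ℝ)
          = (a / k) ^ j * ((k:ℝ) ^ j / (j.factorial : ℝ)) := by ring
        _ ≤ (a / k) ^ k * ((k:ℝ) ^ j / (j.factorial : ℝ)) :=
            mul_le_mul_of_nonneg_right hpow hkj
    refine h1.trans ?_
    rw [← Finset.mul_sum]
    have : (∑ j ∈ range (k+1), (k:ℝ) ^ j / (j.factorial : ℝ)) ≤ Real.exp k :=
      Real.sum_le_exp_of_nonneg hk0.le (k+1)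
    have hpos : (0:ℝ) ≤ (a / k) ^ k := by positivity
    exact mul_le_mul_of_nonneg_left this hpos
  have hratio : (a / k) ^ k ≤ Real.exp (2 * d * s) := by
    have h1 : a / k = (1 + d / s) ^ 2 := by
      rw [hadef, ← hs2]
      field_simp
    rw [h1, ← pow_mul]
    have h2 : (1 + d / s) ≤ Real.exp (d / s) := by
      have := Real.add_one_le_exp (d / s)
      linarith
    have h3 : (1 + d / s) ^ (2 * k) ≤ Real.exp (d / s) ^ (2 * k) := by
      apply pow_le_pow_left₀ (by positivity) h2
    refine h3.trans_eq ?_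
    rw [← Real.exp_nat_mul]
    congr 1
    push_cast
    rw [← hs2]
    field_simp
  calc g a = Real.exp (-a) * ∑ j ∈ range (k+1), a ^ j / (j.factorial : ℝ) := rfl
    _ ≤ Real.exp (-a) * ((a / k) ^ k * Real.exp k) := by
        apply mul_le_mul_of_nonneg_left hsum (Real.exp_pos _).le
    _ ≤ Real.exp (-a) * (Real.exp (2 * d * s) * Real.exp k) := by
        apply mul_le_mul_of_nonneg_left _ (Real.exp_pos _).le
        exact mul_le_mul_of_nonneg_right hratio (Real.exp_pos _).le
    _ = Real.exp (-a + 2 * d * s + k) := by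
        rw [← Real.exp_add, ← Real.exp_add]; congr 1; ring
    _ = Real.exp (-d ^ 2) := by congr 1; nlinarith
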